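/- Let Γ be a probability measure on X×X whose two marginals both equal π̌, decomposed as Γ(dx,dy) = π̌(dx)P̌(x,dy) with P̌(x,dy) = m(x,y)P(x,dy), M = log m, and suppose Γ(|M|∧∞) is well-defined with Γ(M₋) < ∞. Then for every bounded measurable G on X×X, the log-generalized-principal-eigenvalue functional Λ satisfies Λ(G) ≥ ⟨Γ, G − M⟩; consequently Λ*(Γ) := sup_G (⟨Γ,G⟩ − Λ(G)) ≤ ⟨Γ, M⟩ = H(Γ ∥ π̌ ⊙ P). -/

import Mathlib

open MeasureTheory ProbabilityTheory Filter
open scoped ENNReal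

/-- The multiplicative iterates
`(expIter P G T) x = E_x[exp(Σ_{t<T} G(Φ(t), Φ(t+1)))]` for the chain with
transition kernel `P` (in `ℝ≥0∞` to avoid integrability side conditions). -/
noncomputable def expIter {X : Type*} [MeasurableSpace X] (P : Kernel X X)
    (G : X × X → ℝ) : ℕ → X → ℝ≥0∞
  | 0 => fun _ => 1
  | T + 1 => fun x =>
      ∫⁻ y, ENNReal.ofReal (Real.exp (G (x, y))) * expIter P G T y ∂(P x)

section Aux

variable {Y : Type*} [MeasurableSpace Y]

/-- Jensen's inequality for `exp`, in `ℝ≥0∞`, via the tangent line at the mean. -/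
lemma jensen_exp (μ : Measure Y) [IsProbabilityMeasure μ] {f : Y → ℝ}
    (hf : Integrable f μ) :
    ENNReal.ofReal (Real.exp (∫ y, f y ∂μ)) ≤ ∫⁻ y, ENNReal.ofReal (Real.exp (f y)) ∂μ := by
  set c := ∫ y, f y ∂μ with hc
  set g : Y → ℝ := fun y => Real.exp c * ((1 - c) + f y) with hg
  have hgi : Integrable g μ := (((integrable_const (1 - c)).add hf).const_mul _)
  have hgpi : Integrable (fun y => max (g y) 0) μ := hgi.pos_part
  have hint : ∫ y, g y ∂μ = Real.exp c := by
    rw [hg]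
    rw [integral_const_mul, integral_add (integrable_const _) hf, integral_const]
    simp [← hc]
  have hle : ∀ y, g y ≤ Real.exp (f y) := by
    intro y
    have h1 : (1 - c) + f y = (f y - c) + 1 := by ring
    calc g y = Real.exp c * ((f y - c) + 1) := by rw [hg]; ring_nf
    _ ≤ Real.exp c * Real.exp (f y - c) := by
        exact mul_le_mul_of_nonneg_left (Real.add_one_le_exp _) (Real.exp_pos _).le
    _ = Real.exp (f y) := by rw [← Real.exp_add]; ring_nf
  calc ENNReal.ofReal (Real.exp c) = ENNReal.ofReal (∫ y, g y ∂μ) := by rw [hint]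
  _ ≤ ENNReal.ofReal (∫ y, max (g y) 0 ∂μ) := by
      apply ENNReal.ofReal_le_ofReal
      exact integral_mono hgi hgpi fun y => le_max_left _ _
  _ = ∫⁻ y, ENNReal.ofReal (max (g y) 0) ∂μ := by
      exact ofReal_integral_eq_lintegral_ofReal hgpi
        (Filter.Eventually.of_forall fun y => le_max_right _ _)
  _ ≤ ∫⁻ y, ENNReal.ofReal (Real.exp (f y)) ∂μ := by
      apply lintegral_mono fun y => ENNReal.ofReal_le_ofReal ?_
      exact max_le (hle y) (Real.exp_pos _).le

/-- Change-of-measure pointwise inequality. -/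
lemma ofReal_mul_exp_sub_log_le {t a : ℝ} (ht : 0 ≤ t) :
    ENNReal.ofReal t * ENNReal.ofReal (Real.exp (a - Real.log t))
      ≤ ENNReal.ofReal (Real.exp a) := by
  rcases eq_or_lt_of_le ht with h | h
  · simp [← h]
  · rw [← ENNReal.ofReal_mul ht]
    apply ENNReal.ofReal_le_ofReal
    rw [Real.exp_sub, Real.exp_log h]
    rw [mul_div_cancel₀ _ (ne_of_gt h)]

lemma expIter_measurable {X : Type*} [MeasurableSpace X] (P : Kernel X X)
    [IsSFiniteKernel P] {G : X × X → ℝ} (hG : Measurable G) (T : ℕ) :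
    Measurable (expIter P G T) := by
  induction T with
  | zero => exact measurable_const
  | succ T ih =>
      exact Measurable.lintegral_kernel_prod_right'
        (((Real.measurable_exp.comp hG).ennreal_ofReal).mul (ih.comp measurable_snd))

lemma expIter_le {X : Type*} [MeasurableSpace X] (P : Kernel X X)
    [IsMarkovKernel P] {G : X × X → ℝ} {c : ℝ} (hGc : ∀ p, G p ≤ c) (T : ℕ) (x : X) :
    expIter P G T x ≤ ENNReal.ofReal (Real.exp (c * T)) := by
  induction T generalizing x with
  | zero => simp [expIter]
  | succ T ih =>
      calc expIter P G (T + 1) x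
          = ∫⁻ y, ENNReal.ofReal (Real.exp (G (x, y))) * expIter P G T y ∂(P x) := rfl
      _ ≤ ∫⁻ _, ENNReal.ofReal (Real.exp c) * ENNReal.ofReal (Real.exp (c * T)) ∂(P x) := by
          apply lintegral_mono fun y => ?_
          exact mul_le_mul' (ENNReal.ofReal_le_ofReal (Real.exp_le_exp.2 (hGc _))) (ih y)
      _ = ENNReal.ofReal (Real.exp c) * ENNReal.ofReal (Real.exp (c * T)) := by
          rw [lintegral_const]; simp
      _ = ENNReal.ofReal (Real.exp (c * (T + 1 : ℕ))) := by
          rw [← ENNReal.ofReal_mul (Real.exp_pos _).le, ← Real.exp_add]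
          push_cast
          ring_nf

/-- A measure-level version of `Integrable.integral_compProd`. -/
lemma integrable_integral_compProd' {α β : Type*} [MeasurableSpace α] [MeasurableSpace β]
    {μ : Measure α} [SFinite μ] {κ : Kernel α β} [IsSFiniteKernel κ] {F : α × β → ℝ}
    (hF : Integrable F (μ ⊗ₘ κ)) : Integrable (fun x => ∫ y, F (x, y) ∂κ x) μ := by
  rw [Measure.compProd] at hF
  have := MeasureTheory.Integrable.integral_compProd (E := ℝ)
    (κ := Kernel.const Unit μ) (η := Kernel.prodMkLeft Unit κ) (a := ()) hF
  simpa using this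

end Aux

noncomputable def uSeq {X : Type*} [MeasurableSpace X] (κ : Kernel X X)
    (f : X × X → ℝ) : ℕ → X → ℝ
  | 0 => fun _ => 0
  | T + 1 => fun x => ∫ y, f (x, y) + uSeq κ f T y ∂(κ x)

/-- Upper bound of the bivariate convex dual by relative entropy: if `Γ` is a
probability measure on `X × X` with both marginals `π̌`, of the form
`Γ(dx,dy) = π̌(dx) m(x,y) P(x,dy)` with `Γ(M₋) < ∞` for `M = log m`, then for every
bounded measurable `G`, `Λ(G) ≥ ⟨Γ, G − M⟩`, and consequently
`Λ*(Γ) = sup_G (⟨Γ,G⟩ − Λ(G)) ≤ ⟨Γ, M⟩ = H(Γ ∥ π̌ ⊙ P)`. -/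
theorem stmt17 {X : Type*} [MeasurableSpace X]
    (P : Kernel X X) [IsMarkovKernel P]
    (pic : Measure X) [IsProbabilityMeasure pic]
    (m : X × X → ℝ) (hm : Measurable m) (hm0 : ∀ p, 0 ≤ m p)
    (hmark : ∀ᵐ x ∂pic, ∫⁻ y, ENNReal.ofReal (m (x, y)) ∂(P x) = 1)
    (Γ : Measure (X × X)) [IsProbabilityMeasure Γ]
    (hΓ : ∀ s : Set (X × X), MeasurableSet s →
      Γ s = ∫⁻ x, ∫⁻ y,
        Set.indicator s (fun _ => (1 : ℝ≥0∞)) (x, y)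
          * ENNReal.ofReal (m (x, y)) ∂(P x) ∂pic)
    (hfst : Γ.fst = pic) (hsnd : Γ.snd = pic)
    (hmpos : ∀ᵐ p ∂Γ, 0 < m p)
    (hMneg : ∫⁻ p, ENNReal.ofReal (-Real.log (m p)) ∂Γ < ⊤)
    (Lam : (X × X → ℝ) → ℝ)
    (hLam : ∀ G : X × X → ℝ, Measurable G → (∃ c : ℝ, ∀ p, |G p| ≤ c) →
      ∀ x, Tendsto (fun T : ℕ => (T : ℝ)⁻¹ * Real.log ((expIter P G T x).toReal))
        atTop (nhds (Lam G))) :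
    (∀ G : X × X → ℝ, Measurable G → (∃ c : ℝ, ∀ p, |G p| ≤ c) →
      ((∫ p, G p ∂Γ : ℝ) : EReal)
        ≤ (Lam G : EReal)
          + ((∫⁻ p, ENNReal.ofReal (Real.log (m p)) ∂Γ : ℝ≥0∞) : EReal)
          - (((∫⁻ p, ENNReal.ofReal (-Real.log (m p)) ∂Γ).toReal : ℝ) : EReal))
    ∧ (⨆ (G : {G : X × X → ℝ // Measurable G ∧ ∃ c : ℝ, ∀ p, |G p| ≤ c}),
          (((∫ p, G.1 p ∂Γ) - Lam G.1 : ℝ) : EReal))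
        ≤ ((∫⁻ p, ENNReal.ofReal (Real.log (m p)) ∂Γ : ℝ≥0∞) : EReal)
          - (((∫⁻ p, ENNReal.ofReal (-Real.log (m p)) ∂Γ).toReal : ℝ) : EReal) := by
  classical
  have hMmeas : Measurable fun p : X × X => Real.log (m p) := Real.measurable_log.comp hm
  set A := ∫⁻ p, ENNReal.ofReal (Real.log (m p)) ∂Γ with hAdef
  set B := (∫⁻ p, ENNReal.ofReal (-Real.log (m p)) ∂Γ).toReal with hBdef
  have key : A ≠ ⊤ → ∀ G : X × X → ℝ, Measurable G → (∃ c : ℝ, ∀ p, |G p| ≤ c) →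
      ∫ p, G p ∂Γ ≤ Lam G + (A.toReal - B) := by
    intro hAtop G hGm hGb
    obtain ⟨c0b, hc0b⟩ := hGb
    -- the tilted kernel `P̌`
    set mE : X → X → ℝ≥0∞ := fun x y => ENNReal.ofReal (m (x, y)) with hmE
    have hmEmeas : Measurable (Function.uncurry mE) :=
      ((hm.comp (measurable_fst.prodMk measurable_snd))).ennreal_ofReal
    set Pc : Kernel X X := Kernel.withDensity P mE with hPc
    haveI hPcsf : IsSFiniteKernel Pc :=
      Kernel.IsSFiniteKernel.withDensity (f := mE) P (fun _ _ => ENNReal.ofReal_ne_top)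
    have hPc_apply : ∀ x, Pc x = (P x).withDensity (mE x) := fun x =>
      Kernel.withDensity_apply P hmEmeas x
    have hmExmeas : ∀ x, Measurable (mE x) := fun x =>
      (hm.comp measurable_prodMk_left).ennreal_ofReal
    -- `Γ` is the composition of `pic` and `Pc`
    have hΓeq : Γ = pic ⊗ₘ Pc := by
      ext s hs
      rw [hΓ s hs, Measure.compProd_apply hs]
      refine lintegral_congr fun x => ?_
      rw [hPc_apply x, withDensity_apply _ (measurable_prodMk_left hs),
        ← lintegral_indicator (measurable_prodMk_left hs)]
      refine lintegral_congr fun y => ?_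
      by_cases hxy : (x, y) ∈ s
      · rw [Set.indicator_of_mem hxy, Set.indicator_of_mem (show y ∈ Prod.mk x ⁻¹' s from hxy)]
        simp [hmE]
      · rw [Set.indicator_of_notMem hxy,
          Set.indicator_of_notMem (show y ∉ Prod.mk x ⁻¹' s from hxy)]
        simp
    -- transfer along the second marginal
    have snd_int : ∀ g : X → ℝ, Measurable g → Integrable g pic →
        Integrable (fun p : X × X => g p.2) Γ := by
      intro g hg hgi
      rw [← hsnd, Measure.snd] at hgi
      exact (integrable_map_measure hg.aestronglyMeasurable
        measurable_snd.aemeasurable).mp hgi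
    have snd_integral : ∀ g : X → ℝ, Measurable g →
        ∫ p, g p.2 ∂Γ = ∫ x, g x ∂pic := by
      intro g hg
      rw [← hsnd, Measure.snd]
      exact (integral_map measurable_snd.aemeasurable hg.aestronglyMeasurable).symm
    -- integrability of `log m` and `G`
    have habs : ∀ t : ℝ, ENNReal.ofReal |t| ≤ ENNReal.ofReal t + ENNReal.ofReal (-t) := by
      intro t
      rcases le_total 0 t with h | h
      · rw [abs_of_nonneg h]; exact le_add_right le_rfl
      · rw [abs_of_nonpos h]; exact le_add_left le_rfl
    have hMint : Integrable (fun p => Real.log (m p)) Γ := by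
      refine ⟨hMmeas.aestronglyMeasurable, ?_⟩
      rw [hasFiniteIntegral_iff_norm]
      calc ∫⁻ p, ENNReal.ofReal ‖Real.log (m p)‖ ∂Γ
          ≤ ∫⁻ p, ENNReal.ofReal (Real.log (m p)) + ENNReal.ofReal (-Real.log (m p)) ∂Γ :=
            lintegral_mono fun p => by rw [Real.norm_eq_abs]; exact habs _
      _ = A + ∫⁻ p, ENNReal.ofReal (-Real.log (m p)) ∂Γ := by
            rw [lintegral_add_left hMmeas.ennreal_ofReal, hAdef]
      _ < ⊤ := ENNReal.add_lt_top.2 ⟨lt_top_iff_ne_top.2 hAtop, hMneg⟩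
    have hGint : Integrable G Γ :=
      (integrable_const c0b).mono' hGm.aestronglyMeasurable
        (Filter.Eventually.of_forall fun p => by
          rw [Real.norm_eq_abs]; exact hc0b p)
    set f₀ : X × X → ℝ := fun p => G p - Real.log (m p) with hf₀def
    have hf₀meas : Measurable f₀ := hGm.sub hMmeas
    have hf₀int : Integrable f₀ Γ := hGint.sub hMint
    set c₀ := ∫ p, f₀ p ∂Γ with hc₀def
    have hintM : ∫ p, Real.log (m p) ∂Γ = A.toReal - B := by
      rw [integral_eq_lintegral_pos_part_sub_lintegral_neg_part hMint, hAdef, hBdef]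
    have hc₀eq : c₀ = ∫ p, G p ∂Γ - (A.toReal - B) := by
      rw [hc₀def, integral_sub hGint hMint, hintM]
    -- the stationary sequence of expectations
    have hu_meas : ∀ T, Measurable (uSeq Pc f₀ T) := by
      intro T
      induction T with
      | zero => simp only [uSeq]; exact measurable_const
      | succ T ih =>
          have hsm : StronglyMeasurable
              (Function.uncurry fun x y => f₀ (x, y) + uSeq Pc f₀ T y) :=
            ((hf₀meas.comp (measurable_fst.prodMk measurable_snd)).add
              (ih.comp measurable_snd)).stronglyMeasurable
          simpa only [uSeq] using
            (MeasureTheory.StronglyMeasurable.integral_kernel_prod_right (κ := Pc) hsm).measurable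
    have hu : ∀ T, Integrable (uSeq Pc f₀ T) pic ∧ ∫ x, uSeq Pc f₀ T x ∂pic = T * c₀ := by
      intro T
      induction T with
      | zero => constructor <;> simp [uSeq]
      | succ T ih =>
          have hFi : Integrable (fun p : X × X => f₀ p + uSeq Pc f₀ T p.2) Γ :=
            hf₀int.add (snd_int _ (hu_meas T) ih.1)
          have hFi' := hFi
          rw [hΓeq] at hFi'
          constructor
          · simpa only [uSeq] using integrable_integral_compProd' hFi'
          · have h1 : ∫ x, uSeq Pc f₀ (T + 1) x ∂pic
                = ∫ p, (f₀ p + uSeq Pc f₀ T p.2) ∂Γ := by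
              conv_rhs => rw [hΓeq, Measure.integral_compProd hFi']
              simp only [uSeq]
            rw [h1, integral_add hf₀int (snd_int _ (hu_meas T) ih.1),
              snd_integral _ (hu_meas T), ih.2, ← hc₀def]
            push_cast
            ring
    -- `Pc x` is a.e. a probability measure
    have hprob : ∀ᵐ x ∂pic, IsProbabilityMeasure (Pc x) := by
      filter_upwards [hmark] with x hx
      constructor
      rw [hPc_apply x, withDensity_apply _ MeasurableSet.univ, setLIntegral_univ]
      exact hx
    -- Jensen's inequality, by induction over time
    have hJ : ∀ T, ∀ᵐ x ∂pic,
        ENNReal.ofReal (Real.exp (uSeq Pc f₀ T x)) ≤ expIter P G T x := by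
      intro T
      induction T with
      | zero =>
          refine Filter.Eventually.of_forall fun x => ?_
          simp [uSeq, expIter]
      | succ T ih =>
          have hQmeas : MeasurableSet {y | ENNReal.ofReal (Real.exp (uSeq Pc f₀ T y))
              ≤ expIter P G T y} :=
            measurableSet_le ((Real.measurable_exp.comp (hu_meas T)).ennreal_ofReal)
              (expIter_measurable P hGm T)
          have hΓae : ∀ᵐ p : X × X ∂Γ,
              ENNReal.ofReal (Real.exp (uSeq Pc f₀ T p.2)) ≤ expIter P G T p.2 := by
            rw [← hsnd, Measure.snd] at ih
            exact (ae_map_iff measurable_snd.aemeasurable hQmeas).mp ih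
          have hae2 : ∀ᵐ x ∂pic, ∀ᵐ y ∂(Pc x),
              ENNReal.ofReal (Real.exp (uSeq Pc f₀ T y)) ≤ expIter P G T y := by
            rw [hΓeq] at hΓae
            exact Measure.ae_ae_of_ae_compProd hΓae
          have hFi : Integrable (fun p : X × X => f₀ p + uSeq Pc f₀ T p.2) Γ :=
            hf₀int.add (snd_int _ (hu_meas T) (hu T).1)
          rw [hΓeq] at hFi
          have hint_ae : ∀ᵐ x ∂pic,
              Integrable (fun y => f₀ (x, y) + uSeq Pc f₀ T y) (Pc x) :=
            ((Measure.integrable_compProd_iff hFi.aestronglyMeasurable).mp hFi).1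
          filter_upwards [hprob, hae2, hint_ae] with x hx1 hx2 hx3
          haveI := hx1
          have step1 : ∫⁻ y, ENNReal.ofReal (Real.exp (f₀ (x, y))) * expIter P G T y ∂(Pc x)
              ≤ expIter P G (T + 1) x := by
            show _ ≤ ∫⁻ y, ENNReal.ofReal (Real.exp (G (x, y))) * expIter P G T y ∂(P x)
            have hgmeas : Measurable fun y =>
                ENNReal.ofReal (Real.exp (f₀ (x, y))) * expIter P G T y := by
              refine Measurable.mul ?_ (expIter_measurable P hGm T)
              exact ((hf₀meas.comp measurable_prodMk_left).exp).ennreal_ofReal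
            rw [hPc_apply x, lintegral_withDensity_eq_lintegral_mul _ (hmExmeas x) hgmeas]
            refine lintegral_mono fun y => ?_
            show mE x y * (ENNReal.ofReal (Real.exp (f₀ (x, y))) * expIter P G T y) ≤ _
            rw [← mul_assoc]
            refine mul_le_mul_left ?_ _
            exact ofReal_mul_exp_sub_log_le (hm0 (x, y))
          have step2 : ∫⁻ y, ENNReal.ofReal (Real.exp (f₀ (x, y) + uSeq Pc f₀ T y)) ∂(Pc x)
              ≤ ∫⁻ y, ENNReal.ofReal (Real.exp (f₀ (x, y))) * expIter P G T y ∂(Pc x) := by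
            refine lintegral_mono_ae ?_
            filter_upwards [hx2] with y hy
            rw [Real.exp_add, ENNReal.ofReal_mul (Real.exp_pos _).le]
            exact mul_le_mul_right hy _
          have step3 : ENNReal.ofReal (Real.exp (uSeq Pc f₀ (T + 1) x))
              ≤ ∫⁻ y, ENNReal.ofReal (Real.exp (f₀ (x, y) + uSeq Pc f₀ T y)) ∂(Pc x) := by
            simpa only [uSeq] using jensen_exp (Pc x) hx3
          exact le_trans (le_trans step3 step2) step1
    -- conclusion by Fatou's lemma
    set c' := max (max c0b 0) c₀ with hc'def
    have hc'G : ∀ p, G p ≤ c' :=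
      fun p => le_trans (le_trans (le_abs_self _) (hc0b p))
        (le_trans (le_max_left _ _) (le_max_left _ _))
    have hc'0 : (0:ℝ) ≤ c' := le_trans (le_max_right _ _) (le_max_left _ _)
    have hc'c₀ : c₀ ≤ c' := le_max_right _ _
    have hub : ∀ T (x : X), expIter P G T x ≤ ENNReal.ofReal (Real.exp (c' * T)) :=
      expIter_le P hc'G
    have hv_meas : ∀ T : ℕ, Measurable fun x =>
        ENNReal.ofReal (c' - (T:ℝ)⁻¹ * Real.log ((expIter P G T x).toReal)) := fun T =>
      (measurable_const.sub ((Real.measurable_log.comp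
        (expIter_measurable P hGm T).ennreal_toReal).const_mul _)).ennreal_ofReal
    have hWbound : ∀ T : ℕ, 1 ≤ T →
        ∫⁻ x, ENNReal.ofReal (c' - (T:ℝ)⁻¹ * Real.log ((expIter P G T x).toReal)) ∂pic
          ≤ ENNReal.ofReal (c' - c₀) := by
      intro T hT
      have hTpos : (0:ℝ) < T := by exact_mod_cast hT
      have hTne : (T:ℝ) ≠ 0 := ne_of_gt hTpos
      have haeb : ∀ᵐ x ∂pic,
          c' - (T:ℝ)⁻¹ * Real.log ((expIter P G T x).toReal)
            ≤ c' - (T:ℝ)⁻¹ * uSeq Pc f₀ T x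
          ∧ 0 ≤ c' - (T:ℝ)⁻¹ * Real.log ((expIter P G T x).toReal) := by
        filter_upwards [hJ T] with x hx
        have hne : expIter P G T x ≠ ⊤ :=
          ne_top_of_le_ne_top ENNReal.ofReal_ne_top (hub T x)
        have h1 : Real.exp (uSeq Pc f₀ T x) ≤ (expIter P G T x).toReal := by
          have := ENNReal.toReal_mono hne hx
          rwa [ENNReal.toReal_ofReal (Real.exp_pos _).le] at this
        have ht0 : 0 < (expIter P G T x).toReal := lt_of_lt_of_le (Real.exp_pos _) h1
        have h2 : (expIter P G T x).toReal ≤ Real.exp (c' * T) :=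
          ENNReal.toReal_le_of_le_ofReal (Real.exp_pos _).le (hub T x)
        have h3 : uSeq Pc f₀ T x ≤ Real.log ((expIter P G T x).toReal) :=
          (Real.le_log_iff_exp_le ht0).mpr h1
        have h4 : Real.log ((expIter P G T x).toReal) ≤ c' * T :=
          (Real.log_le_iff_le_exp ht0).mpr h2
        constructor
        · have := mul_le_mul_of_nonneg_left h3 (by positivity : (0:ℝ) ≤ (T:ℝ)⁻¹)
          linarith
        · have := mul_le_mul_of_nonneg_left h4 (by positivity : (0:ℝ) ≤ (T:ℝ)⁻¹)
          rw [show (T:ℝ)⁻¹ * (c' * T) = c' by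
            rw [mul_comm c' (T:ℝ), ← mul_assoc, inv_mul_cancel₀ hTne, one_mul]] at this
          linarith
      have hint : Integrable (fun x => c' - (T:ℝ)⁻¹ * uSeq Pc f₀ T x) pic :=
        (integrable_const c').sub ((hu T).1.const_mul _)
      calc ∫⁻ x, ENNReal.ofReal (c' - (T:ℝ)⁻¹ * Real.log ((expIter P G T x).toReal)) ∂pic
          ≤ ∫⁻ x, ENNReal.ofReal (c' - (T:ℝ)⁻¹ * uSeq Pc f₀ T x) ∂pic := by
            refine lintegral_mono_ae ?_
            filter_upwards [haeb] with x hx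
            exact ENNReal.ofReal_le_ofReal hx.1
      _ = ENNReal.ofReal (∫ x, (c' - (T:ℝ)⁻¹ * uSeq Pc f₀ T x) ∂pic) := by
            refine (ofReal_integral_eq_lintegral_ofReal hint ?_).symm
            filter_upwards [haeb] with x hx
            simpa using (by linarith [hx.1, hx.2] :
              (0:ℝ) ≤ c' - (T:ℝ)⁻¹ * uSeq Pc f₀ T x)
      _ = ENNReal.ofReal (c' - c₀) := by
            congr 1
            rw [integral_sub (integrable_const c') ((hu T).1.const_mul _), integral_const,
              integral_const_mul, (hu T).2]
            simp only [probReal_univ, smul_eq_mul]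
            field_simp
      _ ≤ ENNReal.ofReal (c' - c₀) := le_rfl
    have hliminf : ∀ x, Tendsto (fun T : ℕ =>
        ENNReal.ofReal (c' - (T:ℝ)⁻¹ * Real.log ((expIter P G T x).toReal))) atTop
        (nhds (ENNReal.ofReal (c' - Lam G))) := by
      intro x
      exact (ENNReal.continuous_ofReal.tendsto _).comp
        (tendsto_const_nhds.sub (hLam G hGm ⟨c0b, hc0b⟩ x))
    have main : ENNReal.ofReal (c' - Lam G) ≤ ENNReal.ofReal (c' - c₀) := by
      calc ENNReal.ofReal (c' - Lam G)
          = ∫⁻ _, ENNReal.ofReal (c' - Lam G) ∂pic := by rw [lintegral_const]; simp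
      _ = ∫⁻ x, liminf (fun T : ℕ =>
            ENNReal.ofReal (c' - (T:ℝ)⁻¹ * Real.log ((expIter P G T x).toReal))) atTop ∂pic :=
          lintegral_congr fun x => ((hliminf x).liminf_eq).symm
      _ ≤ liminf (fun T : ℕ => ∫⁻ x,
            ENNReal.ofReal (c' - (T:ℝ)⁻¹ * Real.log ((expIter P G T x).toReal)) ∂pic) atTop :=
          lintegral_liminf_le hv_meas
      _ ≤ ENNReal.ofReal (c' - c₀) := by
          apply Filter.liminf_le_of_frequently_le'
          apply Filter.Eventually.frequently
          filter_upwards [Filter.eventually_ge_atTop 1] with T hT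
          exact hWbound T hT
    have hfin : c' - Lam G ≤ c' - c₀ :=
      (ENNReal.ofReal_le_ofReal_iff (by linarith)).mp main
    linarith [hc₀eq, hfin]
  have hAcast : A ≠ ⊤ → (A : EReal) = ((A.toReal : ℝ) : EReal) := by
    intro hAtop
    have h : A = ENNReal.ofReal A.toReal := (ENNReal.ofReal_toReal hAtop).symm
    conv_lhs => rw [h]
    rw [EReal.coe_ennreal_ofReal, max_eq_left ENNReal.toReal_nonneg]
  constructor
  · intro G hGm hGb
    by_cases hAtop : A = ⊤
    · rw [hAtop, EReal.coe_ennreal_top, EReal.coe_add_top, EReal.top_sub_coe]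
      exact le_top
    · have h := key hAtop G hGm hGb
      rw [hAcast hAtop, ← EReal.coe_add, ← EReal.coe_sub, EReal.coe_le_coe_iff]
      linarith
  · apply iSup_le
    rintro ⟨G, hGm, hGb⟩
    by_cases hAtop : A = ⊤
    · rw [hAtop, EReal.coe_ennreal_top, EReal.top_sub_coe]
      exact le_top
    · have h := key hAtop G hGm hGb
      rw [hAcast hAtop, ← EReal.coe_sub, EReal.coe_le_coe_iff]
      simp only
      linarith
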